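/- Let (n_i)_{i∈ℕ} be a strictly increasing sequence of pairwise coprime integers with n_i ≥ 12 for all i, and let q_i = p_i^{k_i} be prime powers with pairwise distinct primes p_i ≥ 5 such that gcd(n_i, q_i − 1) > 1 for all i. Set m_i = q_i^{⌊n_i^{3/2}⌋}. Then the profinite group G = ∏_{i∈ℕ} SL_{n_i}(𝔽_{q_i})^{m_i} (each finite factor discrete, G with the product topology) does not have UBERG. -/

import Mathlib

/-- Continuity of a map into a discrete space: preimages of points are open. -/
def ContinuousToDiscrete {G : Type*} [TopologicalSpace G] {H : Type*} (f : G → H) : Prop :=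
  ∀ h : H, IsOpen (f ⁻¹' {h})

/-- `ρ` is a continuous irreducible `n`-dimensional representation of `G` over `F`. -/
def IrredRep (G : Type*) [Group G] [TopologicalSpace G] (F : Type*) [Field F] (n : ℕ)
    (ρ : G →* Matrix.GeneralLinearGroup (Fin n) F) : Prop :=
  ContinuousToDiscrete ρ ∧
  ∀ W : Submodule F (Fin n → F),
    (∀ g : G, ∀ v ∈ W, Matrix.mulVec ((ρ g : Matrix (Fin n) (Fin n) F)) v ∈ W) →
      W = ⊥ ∨ W = ⊤

/-- Two representations are equivalent if they are conjugate in `GL_n(F)`. -/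
def RepEquiv {G : Type*} [Group G] {F : Type*} [Field F] {n : ℕ}
    (ρ₁ ρ₂ : G →* Matrix.GeneralLinearGroup (Fin n) F) : Prop :=
  ∃ x : Matrix.GeneralLinearGroup (Fin n) F, ∀ g : G, x * ρ₁ g * x⁻¹ = ρ₂ g

/-- A topological group has UBERG (uniformly bounded exponential representation growth)
if there is `c > 0` such that for every finite field `F` and `n ≥ 1` the continuous
irreducible `n`-dimensional `F`-representations of `G` fall into at most `|F|^(c*n)`
equivalence classes. -/
def HasUBERG (G : Type*) [Group G] [TopologicalSpace G] : Prop :=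
  ∃ c : ℕ, 0 < c ∧ ∀ (F : Type) [Field F] [Fintype F] (n : ℕ), 1 ≤ n →
    ∃ R : Finset (G →* Matrix.GeneralLinearGroup (Fin n) F),
      (∀ ρ ∈ R, IrredRep G F n ρ) ∧
      R.card ≤ Fintype.card F ^ (c * n) ∧
      ∀ ρ : G →* Matrix.GeneralLinearGroup (Fin n) F,
        IrredRep G F n ρ → ∃ ρ' ∈ R, RepEquiv ρ' ρ

/-- A topological group is topologically finitely generated if some finite subset
generates a dense subgroup. -/
def TopFG (G : Type*) [Group G] [TopologicalSpace G] : Prop :=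
  ∃ S : Finset G, Dense ((Subgroup.closure (S : Set G) : Subgroup G) : Set G)

/-- Finite special linear groups are given the discrete topology. -/
instance SLdiscreteTopology (m : Type*) [DecidableEq m] [Fintype m]
    (R : Type*) [CommRing R] : TopologicalSpace (Matrix.SpecialLinearGroup m R) := ⊥

instance SLdiscrete (m : Type*) [DecidableEq m] [Fintype m]
    (R : Type*) [CommRing R] : DiscreteTopology (Matrix.SpecialLinearGroup m R) :=
  ⟨rfl⟩

/- ### Auxiliary lemmas -/

open Matrix

/-- Any nonzero vector is the image of the first standard basis vector under
a matrix of determinant one (for `n ≥ 2`). -/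
lemma exists_det_one_mulVec {F : Type*} [Field F] {n : ℕ} (hn : 2 ≤ n)
    (v : Fin n → F) (hv : v ≠ 0) :
    ∃ A : Matrix (Fin n) (Fin n) F, A.det = 1 ∧
      A.mulVec (Pi.single (⟨0, by omega⟩ : Fin n) 1) = v := by
  have hli : LinearIndepOn F id ({v} : Set (Fin n → F)) :=
    LinearIndepOn.singleton hv
  let b := Module.Basis.extend hli
  let e := b.indexEquiv (Pi.basisFun F (Fin n))
  have hvmem : v ∈ hli.extend (Set.subset_univ _) :=
    hli.subset_extend _ rfl
  let iv : ↑(hli.extend (Set.subset_univ ({v} : Set (Fin n → F)))) := ⟨v, hvmem⟩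
  let c' : Module.Basis (Fin n) F (Fin n → F) := (b.reindex e).reindex (Equiv.swap (e iv) ⟨0, by omega⟩)
  have hc'0 : c' ⟨0, by omega⟩ = v := by
    simp [c', Equiv.swap_apply_right, b, iv, Module.Basis.extend_apply_self]
  let g : (Fin n → F) ≃ₗ[F] (Fin n → F) := (Pi.basisFun F (Fin n)).equiv c' (Equiv.refl _)
  have hg : g (Pi.single (⟨0, by omega⟩ : Fin n) 1) = v := by
    have := (Pi.basisFun F (Fin n)).equiv_apply (⟨0, by omega⟩ : Fin n) c' (Equiv.refl _)
    rw [Pi.basisFun_apply] at this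
    simpa [hc'0] using this
  clear_value g
  set M := LinearMap.toMatrix' (g : (Fin n → F) →ₗ[F] (Fin n → F)) with hM
  have hMinv : M * LinearMap.toMatrix' (g.symm : (Fin n → F) →ₗ[F] (Fin n → F)) = 1 := by
    rw [hM, ← LinearMap.toMatrix'_comp]
    simp [LinearMap.toMatrix'_id]
  have hdet : M.det ≠ 0 := by
    intro h
    have := congrArg Matrix.det hMinv
    rw [Matrix.det_mul, h, zero_mul, Matrix.det_one] at this
    exact zero_ne_one this
  set i1 : Fin n := ⟨1, by omega⟩ with hi1
  set D : Matrix (Fin n) (Fin n) F := Matrix.diagonal (Function.update 1 i1 M.det⁻¹) with hD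
  refine ⟨M * D, ?_, ?_⟩
  · rw [Matrix.det_mul, hD, Matrix.det_diagonal]
    rw [Finset.prod_update_of_mem (Finset.mem_univ i1)]
    simp [mul_inv_cancel₀ hdet]
  · rw [← Matrix.mulVec_mulVec]
    have hDv : D.mulVec (Pi.single (⟨0, by omega⟩ : Fin n) 1) =
        Pi.single (⟨0, by omega⟩ : Fin n) 1 := by
      rw [hD]
      ext i
      simp only [Matrix.mulVec_single, Pi.smul_apply, Matrix.col_apply, MulOpposite.op_one, one_smul,
        Matrix.diagonal_apply, Pi.single_apply, mul_one]
      split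
      · next h =>
          rw [h, Function.update_of_ne (by simp [hi1, Fin.ext_iff])]
          rfl
      · rfl
    rw [hDv]
    have : M.mulVec (Pi.single (⟨0, by omega⟩ : Fin n) 1) =
        (Matrix.toLin' M) (Pi.single (⟨0, by omega⟩ : Fin n) 1) := by
      simp [Matrix.toLin'_apply]
    rw [this, hM, Matrix.toLin'_toMatrix']
    exact hg

/-- `SL_n` acts transitively on nonzero vectors (`n ≥ 2`). -/
lemma exists_SL_mulVec {F : Type*} [Field F] {n : ℕ} (hn : 2 ≤ n)
    (v : Fin n → F) (hv : v ≠ 0) :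
    ∃ A : Matrix.SpecialLinearGroup (Fin n) F,
      (A : Matrix (Fin n) (Fin n) F).mulVec (Pi.single (⟨0, by omega⟩ : Fin n) 1) = v := by
  obtain ⟨A, hdet, hA⟩ := exists_det_one_mulVec hn v hv
  exact ⟨⟨A, hdet⟩, hA⟩

/-- The standard representation of `SL_n(F)` is irreducible for `n ≥ 2`. -/
lemma SL_irred {F : Type*} [Field F] {n : ℕ} (hn : 2 ≤ n)
    (W : Submodule F (Fin n → F))
    (hW : ∀ A : Matrix.SpecialLinearGroup (Fin n) F, ∀ v ∈ W,
      (A : Matrix (Fin n) (Fin n) F).mulVec v ∈ W) :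
    W = ⊥ ∨ W = ⊤ := by
  by_cases hbot : W = ⊥
  · exact Or.inl hbot
  right
  obtain ⟨v, hvW, hv⟩ := Submodule.exists_mem_ne_zero_of_ne_bot hbot
  obtain ⟨A, hA⟩ := exists_SL_mulVec hn v hv
  have he0 : (Pi.single (⟨0, by omega⟩ : Fin n) 1 : Fin n → F) ∈ W := by
    have := hW A⁻¹ v hvW
    rwa [← hA, Matrix.mulVec_mulVec, ← Matrix.SpecialLinearGroup.coe_mul,
      inv_mul_cancel, Matrix.SpecialLinearGroup.coe_one, Matrix.one_mulVec] at this
  rw [Submodule.eq_top_iff']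
  intro w
  by_cases hw : w = 0
  · rw [hw]; exact W.zero_mem
  obtain ⟨B, hB⟩ := exists_SL_mulVec hn w hw
  rw [← hB]
  exact hW B _ he0

theorem statement9 (n p k : ℕ → ℕ) [hp : ∀ i, Fact (p i).Prime]
    (hmono : StrictMono n) (hn12 : ∀ i, 12 ≤ n i)
    (hncop : ∀ i j, i ≠ j → Nat.Coprime (n i) (n j))
    (hp5 : ∀ i, 5 ≤ p i) (hpdist : Function.Injective p)
    (hk : ∀ i, 1 ≤ k i)
    (hgcd : ∀ i, 1 < Nat.gcd (n i) (p i ^ k i - 1))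
    (m : ℕ → ℕ) (hm : ∀ i, m i = (p i ^ k i) ^ Nat.sqrt (n i ^ 3)) :
    ¬ HasUBERG (∀ i : ℕ, Fin (m i) →
        Matrix.SpecialLinearGroup (Fin (n i)) (GaloisField (p i) (k i))) := by
  rintro ⟨c, hc, H⟩
  set G := (∀ i : ℕ, Fin (m i) →
      Matrix.SpecialLinearGroup (Fin (n i)) (GaloisField (p i) (k i))) with hG
  set i : ℕ := (c + 1) ^ 2 with hidef
  haveI : Fact (p i).Prime := hp i
  letI : Fintype (GaloisField (p i) (k i)) := Fintype.ofFinite _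
  have hN2 : 2 ≤ n i := le_trans (by norm_num) (hn12 i)
  have hN : 1 ≤ n i := by omega
  obtain ⟨R, hRirr, hRcard, hRcover⟩ := H (GaloisField (p i) (k i)) (n i) hN
  -- the family of representations
  let ρ : Fin (m i) → (G →* Matrix.GeneralLinearGroup (Fin (n i)) (GaloisField (p i) (k i))) :=
    fun j => (Matrix.SpecialLinearGroup.toGL).comp
      ((Pi.evalMonoidHom
          (fun _ : Fin (m i) =>
            Matrix.SpecialLinearGroup (Fin (n i)) (GaloisField (p i) (k i))) j).comp
        (Pi.evalMonoidHom
          (fun i' : ℕ => Fin (m i') →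
            Matrix.SpecialLinearGroup (Fin (n i')) (GaloisField (p i') (k i'))) i))
  have hρ_apply : ∀ (j : Fin (m i)) (g : G),
      ((ρ j g : Matrix.GeneralLinearGroup (Fin (n i)) (GaloisField (p i) (k i))) :
        Matrix (Fin (n i)) (Fin (n i)) (GaloisField (p i) (k i))) = (g i j :
          Matrix.SpecialLinearGroup (Fin (n i)) (GaloisField (p i) (k i))) := fun j g => rfl
  -- each ρ j is an irreducible continuous representation
  have hirr : ∀ j, IrredRep G (GaloisField (p i) (k i)) (n i) (ρ j) := by
    intro j
    constructor
    · intro h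
      have : (ρ j) ⁻¹' {h} =
          (fun g : G => g i j) ⁻¹' (Matrix.SpecialLinearGroup.toGL ⁻¹' {h}) := rfl
      rw [this]
      exact ((continuous_apply j).comp (continuous_apply i)).isOpen_preimage _
        (isOpen_discrete _)
    · intro W hWinv
      refine SL_irred hN2 W ?_
      intro A v hvW
      have := hWinv (Pi.mulSingle i (Pi.mulSingle j A)) v hvW
      rwa [hρ_apply, Pi.mulSingle_eq_same, Pi.mulSingle_eq_same] at this
  -- distinct indices give inequivalent representations
  have hne : ∀ j j' : Fin (m i), j ≠ j' → ¬ RepEquiv (ρ j) (ρ j') := by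
    intro j j' hjj ⟨x, hx⟩
    set s : Matrix.SpecialLinearGroup (Fin (n i)) (GaloisField (p i) (k i)) :=
      ⟨Matrix.transvection (⟨0, by omega⟩ : Fin (n i)) ⟨1, by omega⟩ 1,
        Matrix.det_transvection_of_ne _ _ (by simp [Fin.ext_iff]) 1⟩ with hs
    set g : G := Pi.mulSingle i (Pi.mulSingle j s) with hgdef
    have h1 : ρ j g = Matrix.SpecialLinearGroup.toGL s := by
      show Matrix.SpecialLinearGroup.toGL (g i j) = _
      rw [hgdef, Pi.mulSingle_eq_same, Pi.mulSingle_eq_same]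
    have h2 : ρ j' g = 1 := by
      show Matrix.SpecialLinearGroup.toGL (g i j') = _
      rw [hgdef, Pi.mulSingle_eq_same, Pi.mulSingle_eq_of_ne (Ne.symm hjj), _root_.map_one]
    have h3 := hx g
    rw [h1, h2] at h3
    have h4 : Matrix.SpecialLinearGroup.toGL s = 1 := by
      have := congrArg (fun z => x⁻¹ * z * x) h3
      simpa [mul_assoc] using this
    have h5 : (s : Matrix (Fin (n i)) (Fin (n i)) (GaloisField (p i) (k i))) = 1 := by
      have := congrArg (fun z : Matrix.GeneralLinearGroup (Fin (n i)) (GaloisField (p i) (k i))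
        => (z : Matrix (Fin (n i)) (Fin (n i)) (GaloisField (p i) (k i)))) h4
      exact this
    have h6 := congrFun (congrFun h5 (⟨0, by omega⟩ : Fin (n i))) (⟨1, by omega⟩ : Fin (n i))
    rw [hs] at h6
    simp [Matrix.transvection, Matrix.one_apply, Fin.ext_iff,
      Matrix.single_apply_same, Matrix.single] at h6
  -- produce an injection from Fin (m i) into R
  choose f hfR hfE using fun j => hRcover (ρ j) (hirr j)
  have hinj : Set.InjOn f ↑(Finset.univ : Finset (Fin (m i))) := by
    intro j _ j' _ hf
    by_contra hjj
    apply hne j j' hjj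
    obtain ⟨x, hx⟩ := hfE j
    obtain ⟨y, hy⟩ := hfE j'
    rw [hf] at hx
    refine ⟨y * x⁻¹, fun g => ?_⟩
    rw [← hx g, ← hy g]
    group
  have hcard : m i ≤ R.card := by
    calc m i = (Finset.univ : Finset (Fin (m i))).card := by simp
    _ ≤ R.card := Finset.card_le_card_of_injOn f (fun j _ => hfR j) hinj
  -- counting contradiction
  have hFcard : Fintype.card (GaloisField (p i) (k i)) = p i ^ k i := by
    rw [← Nat.card_eq_fintype_card]
    exact GaloisField.card _ _ (by have := hk i; omega)
  have hq1 : 1 < p i ^ k i := by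
    have := hp5 i
    have := hk i
    calc 1 < p i := by omega
    _ = p i ^ 1 := (pow_one _).symm
    _ ≤ p i ^ k i := Nat.pow_le_pow_right (by omega) (hk i)
  have hni : (c + 1) ^ 2 ≤ n i := le_trans (le_of_eq hidef) hmono.le_apply
  have hlt : c * n i < Nat.sqrt (n i ^ 3) := by
    have hsq : (c + 1) * n i ≤ Nat.sqrt (n i ^ 3) := by
      rw [Nat.le_sqrt]
      nlinarith
    nlinarith
  have hfinal : m i ≤ (p i ^ k i) ^ (c * n i) := by
    calc m i ≤ R.card := hcard
    _ ≤ Fintype.card (GaloisField (p i) (k i)) ^ (c * n i) := hRcard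
    _ = (p i ^ k i) ^ (c * n i) := by rw [hFcard]
  rw [hm i] at hfinal
  exact absurd hfinal (not_le.2 (Nat.pow_lt_pow_right hq1 hlt))
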